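/- arXiv:math/0409166 — 3 statements merged into one kernel-verified Lean document; each statement's English description precedes it below -/
import Mathlib

section
/- Let (C, d) be a finite-dimensional Z₂-graded cochain complex over ℝ equipped with an inner product for which C^even and C^odd are orthogonal. Let d^♯ denote the adjoint of d. Then the canonical isomorphism det C ≅ det HC maps the norm ||·||_{det C} induced by the inner product on C to T_C · ||·||_{det HC}, where ||·||_{det HC} is the norm induced by the inner product on HC obtained by restriction to harmonic elements (i.e. via the orthogonal identification HC ≅ Z ∩ B^⊥), and T_C := Vol(d̄: C^even → C^odd) / Vol(d̄: C^odd → C^even). -/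
/-!
STATEMENT 2: For a finite-dimensional Z₂-graded cochain complex `(C, d)` over ℝ with inner
product (even and odd parts orthogonal), the canonical isomorphism `det C ≅ det HC` maps the
induced norm `||·||_{det C}` to `T_C · ||·||_{det HC}`, where `HC` is identified with the
harmonic subspaces `H = ker d ∩ (im d)^⊥` and
`T_C = Vol(d̄ : C^even → C^odd) / Vol(d̄ : C^odd → C^even)`.

Concretely (and equivalently), this says: for any orthonormal bases `β` of `B = im d`,
`η` of the harmonic space `H`, in each parity, and any lifts `u` with `d u = β` (of the
opposite parity), the generators `ω_{C^even} = β^even ∧ η^even ∧ u^even` and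
`ω_{C^odd} = β^odd ∧ η^odd ∧ u^odd` of the top exterior powers satisfy
`‖ω_{C^odd}‖ = T_C · ‖ω_{C^even}‖`, where the norm of a wedge `v₁ ∧ ⋯ ∧ vₙ` (top degree) is
`|det_b(v)|` for an orthonormal basis `b`.  (This is exactly the statement that the canonical
isomorphism `det C ≅ det HC`, which sends `ω_{C^even} ⊗ (ω_{C^odd})^{-1}` to
`ω_{H^even} ⊗ (ω_{H^odd})^{-1}` up to sign, rescales the norm by `T_C`.)
-/

open Module
open scoped Classical

variable {V : Type*} [NormedAddCommGroup V] [InnerProductSpace ℝ V] [FiniteDimensional ℝ V]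
variable {W : Type*} [NormedAddCommGroup W] [InnerProductSpace ℝ W] [FiniteDimensional ℝ W]

/-- `det'`: the determinant of the restriction of `T` to the orthogonal complement of its
kernel (the product of the nonzero eigenvalues, for self-adjoint `T`). -/
noncomputable def detPrime (T : V →ₗ[ℝ] V) : ℝ :=
  if h : ∀ x ∈ (LinearMap.ker T)ᗮ, T x ∈ (LinearMap.ker T)ᗮ
  then LinearMap.det (T.restrict h) else 1

/-- `Vol(ᾱ) = √(det'(α^♯ α))`. -/
noncomputable def volBar (α : V →ₗ[ℝ] W) : ℝ :=
  Real.sqrt (detPrime ((LinearMap.adjoint α).comp α))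

/-- The norm, in the determinant line `Λ^top V` with the inner product induced norm, of the
wedge `v 0 ∧ ⋯ ∧ v (n-1)` of a family `v` of `n = dim V` vectors: `|det_b v|` for an
orthonormal basis `b` of `V`. -/
noncomputable def wedgeNorm (v : Fin (finrank ℝ V) → V) : ℝ :=
  |(stdOrthonormalBasis ℝ V).toBasis.det v|


open scoped RealInnerProductSpace

lemma orthonormal_sum_elim {a b : ℕ} {f : Fin a → V} {g : Fin b → V}
    (hf : Orthonormal ℝ f) (hg : Orthonormal ℝ g)
    (h : ∀ i j, ⟪f i, g j⟫ = 0) : Orthonormal ℝ (Sum.elim f g) := by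
  rw [orthonormal_iff_ite] at hf hg ⊢
  rintro (i | i) (j | j)
  · simpa using hf i j
  · simpa using h i j
  · simpa [real_inner_comm (g i)] using h j i
  · simpa using hg i j

lemma append_eq_elim_comp {α : Type*} {a b : ℕ} (f : Fin a → α) (g : Fin b → α) :
    Fin.append f g = Sum.elim f g ∘ ⇑finSumFinEquiv.symm := by
  funext i
  rcases finSumFinEquiv.surjective i with ⟨p, rfl⟩
  rcases p with p | p <;>
    simp [finSumFinEquiv_apply_left, finSumFinEquiv_apply_right]

lemma repr_orthonormal {ι : Type*} [Fintype ι] [DecidableEq ι] (b : Basis ι ℝ V)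
    (hb : Orthonormal ℝ ⇑b) (x : V) (i : ι) : b.repr x i = ⟪b i, x⟫ := by
  have hx := b.sum_repr x
  conv_rhs => rw [← hx]
  rw [inner_sum]
  simp only [real_inner_smul_right, orthonormal_iff_ite.mp hb]
  simp

lemma wedgeNorm_eq (c : OrthonormalBasis (Fin (finrank ℝ V)) ℝ V)
    (v : Fin (finrank ℝ V) → V) : wedgeNorm v = |c.toBasis.det v| := by
  unfold wedgeNorm
  rw [Basis.det_apply, Basis.det_apply,
    ← Basis.toMatrix_mul_toMatrix (stdOrthonormalBasis ℝ V).toBasis c.toBasis v,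
    Matrix.det_mul, abs_mul]
  have h := (stdOrthonormalBasis ℝ V).det_to_matrix_orthonormalBasis_real c
  rw [Basis.det_apply, ← c.coe_toBasis] at h
  rcases h with h | h <;> rw [h] <;> norm_num


lemma volBar_mul_wedgeNorm (α : V →ₗ[ℝ] W) {m k : ℕ}
    (κ : Fin m → V) (hκo : Orthonormal ℝ κ)
    (hκs : Submodule.span ℝ (Set.range κ) = LinearMap.ker α)
    (γ : Fin k → W) (hγo : Orthonormal ℝ γ)
    (hγs : Submodule.span ℝ (Set.range γ) = LinearMap.range α)
    (u : Fin k → V) (hu : ∀ j, α (u j) = γ j)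
    (h : m + k = finrank ℝ V) :
    volBar α * wedgeNorm (fun j => Fin.append κ u (Fin.cast h.symm j)) = 1 := by
  classical
  set K := LinearMap.ker α with hK
  -- dimension counts
  have hKm : finrank ℝ K = m := by
    rw [← hκs, finrank_span_eq_card hκo.linearIndependent, Fintype.card_fin]
  have hk : finrank ℝ Kᗮ = k := by
    have h2 := Submodule.finrank_add_finrank_orthogonal (K := K)
    omega
  -- orthonormal basis of Kᗮ
  set e0 : OrthonormalBasis (Fin k) ℝ Kᗮ :=
    (stdOrthonormalBasis ℝ Kᗮ).reindex (finCongr hk) with he0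
  set e : Fin k → V := fun i => (e0 i : V) with he
  have heo : Orthonormal ℝ e := by
    have h1 := e0.orthonormal
    rw [orthonormal_iff_ite] at h1 ⊢
    intro i j
    rw [he, ← Submodule.coe_inner]
    exact h1 i j
  have hes : Submodule.span ℝ (Set.range e) = Kᗮ := by
    have h1 : Set.range e = Kᗮ.subtype '' Set.range ⇑e0 := by
      rw [← Set.range_comp]; rfl
    have h2 : Submodule.span ℝ (Set.range ⇑e0) = ⊤ := by
      rw [← OrthonormalBasis.coe_toBasis e0]; exact e0.toBasis.span_eq
    rw [h1, Submodule.span_image, h2, Submodule.map_subtype_top]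
  have hκK : ∀ i, κ i ∈ K := fun i => hκs ▸ Submodule.subset_span (Set.mem_range_self i)
  have heK : ∀ i, e i ∈ Kᗮ := fun i => (e0 i).2
  have hcross : ∀ i j, ⟪κ i, e j⟫ = 0 := fun i j =>
    (Submodule.mem_orthogonal K (e j)).mp (heK j) (κ i) (hκK i)
  -- adapted orthonormal basis of V
  have hbon : Orthonormal ℝ (Sum.elim κ e) := orthonormal_sum_elim hκo heo hcross
  have hbsp : ⊤ ≤ Submodule.span ℝ (Set.range (Sum.elim κ e)) := by
    rw [Set.Sum.elim_range, Submodule.span_union, hκs, hes,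
      Submodule.sup_orthogonal_of_hasOrthogonalProjection]
  set b : Basis (Fin m ⊕ Fin k) ℝ V := Basis.mk hbon.linearIndependent hbsp with hb
  have hbco : ⇑b = Sum.elim κ e := Basis.coe_mk _ _
  have hbon' : Orthonormal ℝ ⇑b := hbco ▸ hbon
  -- reduce wedgeNorm to |det Q|
  set ob : OrthonormalBasis (Fin m ⊕ Fin k) ℝ V := b.toOrthonormalBasis hbon' with hob
  set eqv : (Fin m ⊕ Fin k) ≃ Fin (finrank ℝ V) := finSumFinEquiv.trans (finCongr h) with heqv
  set v : Fin (finrank ℝ V) → V := fun j => Fin.append κ u (Fin.cast h.symm j) with hv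
  have hwv : wedgeNorm v = |b.det (Sum.elim κ u)| := by
    rw [wedgeNorm_eq (ob.reindex eqv) v, OrthonormalBasis.reindex_toBasis,
      Basis.toBasis_toOrthonormalBasis, Basis.det_reindex]
    congr 1
    apply congrArg
    funext p
    rcases p with p | p <;>
      simp [hv, heqv, finSumFinEquiv_apply_left, finSumFinEquiv_apply_right]
  set M : Matrix (Fin m ⊕ Fin k) (Fin m ⊕ Fin k) ℝ := b.toMatrix (Sum.elim κ u) with hM
  have hMentry : ∀ p q, M p q = ⟪Sum.elim κ e p, Sum.elim κ u q⟫ := by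
    intro p q
    rw [hM, Basis.toMatrix_apply, repr_orthonormal b hbon', hbco]
  have hM11 : M.toBlocks₁₁ = 1 := by
    ext i j
    rw [Matrix.toBlocks₁₁, Matrix.of_apply, hMentry, Matrix.one_apply]
    simpa using orthonormal_iff_ite.mp hκo i j
  have hM21 : M.toBlocks₂₁ = 0 := by
    ext i j
    rw [Matrix.toBlocks₂₁, Matrix.of_apply, hMentry]
    simpa [real_inner_comm (e i)] using hcross j i
  set Q : Matrix (Fin k) (Fin k) ℝ := M.toBlocks₂₂ with hQ
  have hdetM : M.det = Q.det := by
    rw [← Matrix.fromBlocks_toBlocks M, hM11, hM21, Matrix.det_fromBlocks_zero₂₁,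
      Matrix.det_one, one_mul]
  have hQentry : ∀ i j, Q i j = ⟪e i, u j⟫ := by
    intro i j
    rw [hQ, Matrix.toBlocks₂₂, Matrix.of_apply, hMentry]; rfl
  -- the matrix A of ᾱ
  set A : Matrix (Fin k) (Fin k) ℝ := Matrix.of fun i j => ⟪γ i, α (e j)⟫ with hA
  have hAQ : A * Q = 1 := by
    ext i j
    have hexp : α (u j) = ∑ l, Q l j • α (e l) := by
      conv_lhs => rw [← b.sum_repr (u j)]
      rw [map_sum, Fintype.sum_sum_type]
      have hz : ∀ i : Fin m, α ((b.repr (u j)) (Sum.inl i) • b (Sum.inl i)) = 0 := by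
        intro i
        rw [map_smul]
        have : α (b (Sum.inl i)) = 0 := by
          rw [hbco]
          exact (LinearMap.mem_ker).mp (hκK i)
        rw [this, smul_zero]
      rw [Finset.sum_congr rfl fun i _ => hz i, Finset.sum_const_zero, zero_add]
      congr 1
      funext l
      rw [map_smul, hQentry, repr_orthonormal b hbon', hbco]
      rfl
    have h1 : ∑ l, A i l * Q l j = ⟪γ i, γ j⟫ := by
      rw [← hu j, hexp, inner_sum]
      congr 1
      funext l
      rw [real_inner_smul_right, hA, Matrix.of_apply, mul_comm]
    rw [Matrix.mul_apply, h1, orthonormal_iff_ite.mp hγo i j, Matrix.one_apply]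
  have hdetAQ : A.det * Q.det = 1 := by
    rw [← Matrix.det_mul, hAQ, Matrix.det_one]
  -- compute volBar α = |A.det|
  set T : V →ₗ[ℝ] V := (LinearMap.adjoint α).comp α with hT
  have hkerT : LinearMap.ker T = K := by
    ext x
    constructor
    · intro hx
      have hx' : T x = 0 := hx
      have : ⟪α x, α x⟫ = 0 := by
        rw [← LinearMap.adjoint_inner_right]
        change ⟪x, T x⟫ = 0
        rw [hx', inner_zero_right]
      exact LinearMap.mem_ker.mpr (inner_self_eq_zero.mp this)
    · intro hx
      have : α x = 0 := hx
      show T x = 0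
      rw [hT, LinearMap.comp_apply, this, map_zero]
  have hTmaps : ∀ x, T x ∈ Kᗮ := by
    intro x
    rw [Submodule.mem_orthogonal]
    intro y hy
    have : T x = LinearMap.adjoint α (α x) := rfl
    rw [this, LinearMap.adjoint_inner_right]
    have : α y = 0 := hy
    rw [this, inner_zero_left]
  have hcond : ∀ x ∈ (LinearMap.ker T)ᗮ, T x ∈ (LinearMap.ker T)ᗮ := by
    intro x _
    rw [hkerT]; exact hTmaps x
  -- orthonormal basis of (ker T)ᗮ
  have horth : Kᗮ = (LinearMap.ker T)ᗮ := by rw [hkerT]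
  set eT : Basis (Fin k) ℝ (LinearMap.ker T)ᗮ :=
    e0.toBasis.map (LinearEquiv.ofEq _ _ horth) with heT
  have heTc : ∀ i, (eT i : V) = e i := by
    intro i
    rw [heT, Basis.map_apply, LinearEquiv.coe_ofEq_apply, OrthonormalBasis.coe_toBasis]
  have heTon : Orthonormal ℝ ⇑eT := by
    rw [orthonormal_iff_ite]
    intro i j
    rw [Submodule.coe_inner, heTc, heTc]
    exact orthonormal_iff_ite.mp heo i j
  -- γ as an orthonormal basis of range α
  set R := LinearMap.range α with hR
  have hγR : ∀ i, γ i ∈ R := fun i => hγs ▸ Submodule.subset_span (Set.mem_range_self i)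
  set γ' : Fin k → R := fun i => ⟨γ i, hγR i⟩ with hγ'
  have hγ'on : Orthonormal ℝ γ' := by
    rw [orthonormal_iff_ite]
    intro i j
    rw [Submodule.coe_inner]
    exact orthonormal_iff_ite.mp hγo i j
  have hγ'sp : ⊤ ≤ Submodule.span ℝ (Set.range γ') := by
    have hmap : Submodule.map R.subtype (Submodule.span ℝ (Set.range γ')) =
        Submodule.map R.subtype ⊤ := by
      rw [← Submodule.span_image, Submodule.map_subtype_top]
      have : R.subtype '' Set.range γ' = Set.range γ := by
        rw [← Set.range_comp]; rfl
      rw [this, hγs]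
    have := Submodule.map_injective_of_injective R.injective_subtype hmap
    rw [this]
  set g : OrthonormalBasis (Fin k) ℝ R :=
    (Basis.mk hγ'on.linearIndependent hγ'sp).toOrthonormalBasis
      (by rw [Basis.coe_mk]; exact hγ'on) with hg
  have hgc : ∀ i, (g i : W) = γ i := by
    intro i
    rw [hg, Basis.coe_toOrthonormalBasis, Basis.coe_mk]
  have hexpand : ∀ x : R, (x : W) = ∑ l, ⟪γ l, (x : W)⟫ • γ l := by
    intro x
    conv_lhs => rw [← g.sum_repr x]
    push_cast
    congr 1
    funext l
    rw [g.repr_apply_apply, Submodule.coe_inner, hgc]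
  -- det of restriction
  have hrestr : LinearMap.det (T.restrict hcond) = A.det ^ 2 := by
    rw [← LinearMap.det_toMatrix eT]
    have hmat : LinearMap.toMatrix eT eT (T.restrict hcond) = A.transpose * A := by
      ext i j
      rw [LinearMap.toMatrix_apply, repr_orthonormal eT heTon, Submodule.coe_inner,
        heTc, LinearMap.restrict_coe_apply, heTc]
      have h1 : ⟪e i, T (e j)⟫ = ⟪α (e i), α (e j)⟫ := by
        change ⟪e i, LinearMap.adjoint α (α (e j))⟫ = _
        rw [LinearMap.adjoint_inner_right]
      rw [h1]
      have h2 : α (e j) = ∑ l, ⟪γ l, α (e j)⟫ • γ l := by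
        have := hexpand ⟨α (e j), LinearMap.mem_range_self α (e j)⟩
        simpa using this
      conv_lhs => rw [h2, inner_sum]
      rw [Matrix.mul_apply]
      congr 1
      funext l
      rw [real_inner_smul_right, Matrix.transpose_apply, hA, Matrix.of_apply,
        Matrix.of_apply, real_inner_comm (α (e i))]
      ring
    rw [hmat, Matrix.det_mul, Matrix.det_transpose, sq]
  have hvol : volBar α = |A.det| := by
    unfold volBar detPrime
    rw [← hT, dif_pos hcond, hrestr, Real.sqrt_sq_eq_abs]
  rw [hvol, hwv, Basis.det_apply, ← hM, hdetM, ← abs_mul, hdetAQ, abs_one]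

theorem det_iso_scales_norm_by_torsion
    {Ce Co : Type*}
    [NormedAddCommGroup Ce] [InnerProductSpace ℝ Ce] [FiniteDimensional ℝ Ce]
    [NormedAddCommGroup Co] [InnerProductSpace ℝ Co] [FiniteDimensional ℝ Co]
    (d0 : Ce →ₗ[ℝ] Co) (d1 : Co →ₗ[ℝ] Ce)
    (h10 : d1.comp d0 = 0) (h01 : d0.comp d1 = 0) :
    ∀ (βe : Fin (finrank ℝ (LinearMap.range d1)) → Ce)
      (ηe : Fin (finrank ℝ (LinearMap.ker d0 ⊓ (LinearMap.range d1)ᗮ : Submodule ℝ Ce)) → Ce)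
      (βo : Fin (finrank ℝ (LinearMap.range d0)) → Co)
      (ηo : Fin (finrank ℝ (LinearMap.ker d1 ⊓ (LinearMap.range d0)ᗮ : Submodule ℝ Co)) → Co)
      (ue : Fin (finrank ℝ (LinearMap.range d0)) → Ce)
      (uo : Fin (finrank ℝ (LinearMap.range d1)) → Co),
      -- `βe` is an orthonormal basis of the boundaries `B^even = im d1`
      Orthonormal ℝ βe → Submodule.span ℝ (Set.range βe) = LinearMap.range d1 →
      -- `ηe` is an orthonormal basis of the harmonic space `H^even = ker d0 ∩ (im d1)^⊥`
      Orthonormal ℝ ηe →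
      Submodule.span ℝ (Set.range ηe) = LinearMap.ker d0 ⊓ (LinearMap.range d1)ᗮ →
      Orthonormal ℝ βo → Submodule.span ℝ (Set.range βo) = LinearMap.range d0 →
      Orthonormal ℝ ηo →
      Submodule.span ℝ (Set.range ηo) = LinearMap.ker d1 ⊓ (LinearMap.range d0)ᗮ →
      -- `ue`, `uo` are lifts of `βo`, `βe` through `d`
      (∀ j, d0 (ue j) = βo j) → (∀ j, d1 (uo j) = βe j) →
      ∀ (he : finrank ℝ (LinearMap.range d1) +
              finrank ℝ (LinearMap.ker d0 ⊓ (LinearMap.range d1)ᗮ : Submodule ℝ Ce) +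
              finrank ℝ (LinearMap.range d0) = finrank ℝ Ce)
        (ho : finrank ℝ (LinearMap.range d0) +
              finrank ℝ (LinearMap.ker d1 ⊓ (LinearMap.range d0)ᗮ : Submodule ℝ Co) +
              finrank ℝ (LinearMap.range d1) = finrank ℝ Co),
      wedgeNorm (fun j => Fin.append (Fin.append βo ηo) uo (Fin.cast ho.symm j)) =
        (volBar d0 / volBar d1) *
          wedgeNorm (fun j => Fin.append (Fin.append βe ηe) ue (Fin.cast he.symm j)) := by
  intro βe ηe βo ηo ue uo hβeo hβes hηeo hηes hβoo hβos hηoo hηos hue huo he ho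
  have hcross_e : ∀ i j, ⟪βe i, ηe j⟫ = 0 := by
    intro i j
    have h1 : βe i ∈ LinearMap.range d1 := hβes ▸ Submodule.subset_span (Set.mem_range_self i)
    have h2 : ηe j ∈ LinearMap.ker d0 ⊓ (LinearMap.range d1)ᗮ :=
      hηes ▸ Submodule.subset_span (Set.mem_range_self j)
    exact (Submodule.mem_orthogonal _ _).mp (Submodule.mem_inf.mp h2).2 _ h1
  have hcross_o : ∀ i j, ⟪βo i, ηo j⟫ = 0 := by
    intro i j
    have h1 : βo i ∈ LinearMap.range d0 := hβos ▸ Submodule.subset_span (Set.mem_range_self i)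
    have h2 : ηo j ∈ LinearMap.ker d1 ⊓ (LinearMap.range d0)ᗮ :=
      hηos ▸ Submodule.subset_span (Set.mem_range_self j)
    exact (Submodule.mem_orthogonal _ _).mp (Submodule.mem_inf.mp h2).2 _ h1
  have hone : Orthonormal ℝ (Fin.append βe ηe) := by
    rw [append_eq_elim_comp]
    exact (orthonormal_sum_elim hβeo hηeo hcross_e).comp _ (Equiv.injective _)
  have hono : Orthonormal ℝ (Fin.append βo ηo) := by
    rw [append_eq_elim_comp]
    exact (orthonormal_sum_elim hβoo hηoo hcross_o).comp _ (Equiv.injective _)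
  have hspan_e : Submodule.span ℝ (Set.range (Fin.append βe ηe)) = LinearMap.ker d0 := by
    rw [append_eq_elim_comp, Function.Surjective.range_comp (Equiv.surjective _),
      Set.Sum.elim_range, Submodule.span_union, hβes, hηes,
      inf_comm (LinearMap.ker d0) ((LinearMap.range d1)ᗮ)]
    exact Submodule.sup_orthogonal_inf_of_hasOrthogonalProjection (LinearMap.range_le_ker_iff.mpr h01)
  have hspan_o : Submodule.span ℝ (Set.range (Fin.append βo ηo)) = LinearMap.ker d1 := by
    rw [append_eq_elim_comp, Function.Surjective.range_comp (Equiv.surjective _),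
      Set.Sum.elim_range, Submodule.span_union, hβos, hηos,
      inf_comm (LinearMap.ker d1) ((LinearMap.range d0)ᗮ)]
    exact Submodule.sup_orthogonal_inf_of_hasOrthogonalProjection (LinearMap.range_le_ker_iff.mpr h10)
  have He := volBar_mul_wedgeNorm d0 (Fin.append βe ηe) hone hspan_e βo hβoo hβos ue hue he
  have Ho := volBar_mul_wedgeNorm d1 (Fin.append βo ηo) hono hspan_o βe hβeo hβes uo huo ho
  have hv0 : volBar d0 ≠ 0 := left_ne_zero_of_mul_eq_one He
  have hv1 : volBar d1 ≠ 0 := left_ne_zero_of_mul_eq_one Ho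
  field_simp
  linear_combination Ho - He
end

section
/- Let (C*, d) be an acyclic cochain complex of finite-dimensional real inner product spaces (nonzero in finitely many degrees). Then (1/2) Σ_q (−1)^{q+1} q log det Δ^q = Σ_q (−1)^q log Vol(d̄^q), where Δ^q = d^♯ d + d d^♯ acting on C^q and d̄^q: (ker d^q)^⊥ → im d^q is the induced isomorphism. -/
/-!
STATEMENT 12: For an acyclic cochain complex `(C^*, d)` of finite-dimensional real inner
product spaces (nonzero in finitely many degrees),
`(1/2) Σ_q (−1)^{q+1} q log det Δ^q = Σ_q (−1)^q log Vol(d̄^q)`,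
where `Δ^q = d^♯ d + d d^♯` on `C^q` and `Vol(d̄^q) = √(det'((d^q)^♯ d^q))`, `det'` being the
determinant of the restriction to the orthogonal complement of the kernel (the product of
nonzero eigenvalues).
-/

open Module
open scoped Classical

variable {V : Type*} [NormedAddCommGroup V] [InnerProductSpace ℝ V] [FiniteDimensional ℝ V]
variable {W : Type*} [NormedAddCommGroup W] [InnerProductSpace ℝ W] [FiniteDimensional ℝ W]

set_option linter.unusedSectionVars false
set_option linter.unusedVariables false
set_option maxHeartbeats 1000000

namespace TorsionAux
set_option linter.unusedSectionVars false
set_option maxHeartbeats 1000000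

open LinearMap Submodule
open scoped RealInnerProductSpace

lemma ker_ata (α : V →ₗ[ℝ] W) : ker ((adjoint α).comp α) = ker α := by
  ext x
  simp only [mem_ker, comp_apply]
  refine ⟨fun h => ?_, fun h => by simp [h]⟩
  have h2 : ⟪α x, α x⟫ = 0 := by
    rw [← adjoint_inner_left α x (α x), h, inner_zero_left]
  exact inner_self_eq_zero.mp h2

lemma ker_adjoint (α : V →ₗ[ℝ] W) : ker (adjoint α) = (range α)ᗮ := by
  ext y
  simp only [mem_ker, Submodule.mem_orthogonal]
  constructor
  · rintro h u ⟨x, rfl⟩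
    rw [real_inner_comm, ← adjoint_inner_left α x y, h, inner_zero_left]
  · intro h
    have h1 := h (α (adjoint α y)) ⟨_, rfl⟩
    have h2 : ⟪adjoint α y, adjoint α y⟫ = 0 := by
      rw [adjoint_inner_right]; exact h1
    exact inner_self_eq_zero.mp h2

lemma ata_mem_orth (α : V →ₗ[ℝ] W) (x : V) :
    ((adjoint α).comp α) x ∈ (ker ((adjoint α).comp α))ᗮ := by
  rw [ker_ata]
  rw [Submodule.mem_orthogonal]
  intro u hu
  rw [comp_apply, real_inner_comm, adjoint_inner_left, mem_ker.mp hu, inner_zero_right]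

lemma inv_ata (α : V →ₗ[ℝ] W) :
    ∀ x ∈ (ker ((adjoint α).comp α))ᗮ, ((adjoint α).comp α) x ∈ (ker ((adjoint α).comp α))ᗮ :=
  fun x _ => ata_mem_orth α x

lemma detPrime_eq (T : V →ₗ[ℝ] V)
    (h : ∀ x ∈ (ker T)ᗮ, T x ∈ (ker T)ᗮ) :
    detPrime T = LinearMap.det (T.restrict h) := by
  rw [detPrime, dif_pos h]

lemma det_restrict_congr {f : V →ₗ[ℝ] V} {p q : Submodule ℝ V} (h : p = q)
    (hp : ∀ x ∈ p, f x ∈ p) (hq : ∀ x ∈ q, f x ∈ q) :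
    LinearMap.det (f.restrict hp) = LinearMap.det (f.restrict hq) := by
  subst h; rfl

lemma det_subsingleton {M : Type*} [AddCommGroup M] [Module ℝ M] [Subsingleton M]
    (f : M →ₗ[ℝ] M) : LinearMap.det f = 1 := by
  have : f = LinearMap.id := LinearMap.ext fun x => Subsingleton.elim _ _
  rw [this, LinearMap.det_id]

lemma posSemidef_det_nonneg {n : Type*} [Fintype n] [DecidableEq n] {M : Matrix n n ℝ}
    (h : M.PosSemidef) : 0 ≤ M.det := by
  rw [h.isHermitian.det_eq_prod_eigenvalues]
  exact Finset.prod_nonneg fun i _ => h.eigenvalues_nonneg i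


lemma det_prodMap (f : V →ₗ[ℝ] V) (g : W →ₗ[ℝ] W) :
    LinearMap.det (f.prodMap g) = LinearMap.det f * LinearMap.det g := by
  let b := Module.finBasis ℝ V
  let c := Module.finBasis ℝ W
  rw [← LinearMap.det_toMatrix (b.prod c), LinearMap.toMatrix_prodMap b c f g,
    Matrix.det_fromBlocks_zero₁₂, LinearMap.det_toMatrix, LinearMap.det_toMatrix]

lemma det_eq_mul_restrict (f : V →ₗ[ℝ] V) (K : Submodule ℝ V)
    (h1 : ∀ x ∈ K, f x ∈ K) (h2 : ∀ x ∈ Kᗮ, f x ∈ Kᗮ) :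
    LinearMap.det f = LinearMap.det (f.restrict h1) * LinearMap.det (f.restrict h2) := by
  let e := K.prodEquivOfIsCompl Kᗮ K.isCompl_orthogonal_of_hasOrthogonalProjection
  let P := (f.restrict h1).prodMap (f.restrict h2)
  have key : f ∘ₗ (e : (K × Kᗮ) →ₗ[ℝ] V) = (e : (K × Kᗮ) →ₗ[ℝ] V) ∘ₗ P := by
    apply LinearMap.ext
    rintro ⟨x, y⟩
    simp only [coe_comp, Function.comp_apply, LinearEquiv.coe_coe]
    rw [Submodule.coe_prodEquivOfIsCompl' , Submodule.coe_prodEquivOfIsCompl']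
    simp [P, map_add]
  have hf : f = (e : (K × Kᗮ) →ₗ[ℝ] V) ∘ₗ P ∘ₗ (e.symm : V →ₗ[ℝ] (K × Kᗮ)) := by
    rw [← LinearMap.comp_assoc, ← key]
    apply LinearMap.ext; intro v
    simp
  have hc := LinearMap.det_conj P e
  rw [← hf] at hc
  rw [hc, det_prodMap]

lemma det_restrict_top (f : V →ₗ[ℝ] V) (h : ∀ x ∈ (⊤ : Submodule ℝ V), f x ∈ (⊤ : Submodule ℝ V)) :
    LinearMap.det (f.restrict h) = LinearMap.det f := by
  have hf : f.restrict h =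
      ((Submodule.topEquiv (R := ℝ) (M := V)).symm : V →ₗ[ℝ] (⊤ : Submodule ℝ V)) ∘ₗ
        f ∘ₗ ((Submodule.topEquiv (R := ℝ) (M := V)).symm.symm : (⊤ : Submodule ℝ V) →ₗ[ℝ] V) := by
    apply LinearMap.ext; intro x
    apply Subtype.ext
    simp [LinearMap.restrict_apply]
  rw [hf, LinearMap.det_conj]



lemma restrict_ata (α : V →ₗ[ℝ] W) :
    ((adjoint α).comp α).restrict (inv_ata α) =
      (adjoint (α.comp (Submodule.subtype (ker ((adjoint α).comp α))ᗮ))).comp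
        (α.comp (Submodule.subtype (ker ((adjoint α).comp α))ᗮ)) := by
  set U := (ker ((adjoint α).comp α))ᗮ
  set β := α.comp (Submodule.subtype U)
  apply LinearMap.ext; intro x
  apply ext_inner_left ℝ
  intro v
  rw [comp_apply, adjoint_inner_right]
  have hL : (inner ℝ v ((((adjoint α).comp α).restrict (inv_ata α)) x) : ℝ) =
      ⟪(v : V), ((adjoint α).comp α) (x : V)⟫ := rfl
  rw [hL, comp_apply, adjoint_inner_right]
  rfl

lemma detPrime_ata_pos (α : V →ₗ[ℝ] W) : 0 < detPrime ((adjoint α).comp α) := by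
  rw [detPrime_eq _ (inv_ata α)]
  set U := (ker ((adjoint α).comp α))ᗮ
  set R := ((adjoint α).comp α).restrict (inv_ata α) with hR
  have hne : LinearMap.det R ≠ 0 := by
    intro hdet
    have hlt := LinearMap.bot_lt_ker_of_det_eq_zero hdet
    obtain ⟨x, hx, hx0⟩ := (SetLike.exists_of_lt hlt)
    have hx' : ((adjoint α).comp α) (x : V) = 0 := by
      have h0 := mem_ker.mp hx
      calc ((adjoint α).comp α) (x : V) = ((R x : U) : V) := rfl
        _ = ((0 : U) : V) := by rw [h0]
        _ = 0 := rfl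
    have hxk : (x : V) ∈ ker ((adjoint α).comp α) := mem_ker.mpr hx'
    have : ⟪(x : V), (x : V)⟫ = 0 :=
      (Submodule.mem_orthogonal _ _).mp x.2 _ hxk
    have : (x : V) = 0 := inner_self_eq_zero.mp this
    exact hx0 (by simpa using Subtype.ext this)
  have hnn : 0 ≤ LinearMap.det R := by
    rw [hR, restrict_ata α]
    set β := α.comp (Submodule.subtype U)
    let b := stdOrthonormalBasis ℝ U
    let c := stdOrthonormalBasis ℝ W
    rw [← LinearMap.det_toMatrix b.toBasis,
      LinearMap.toMatrix_comp b.toBasis c.toBasis b.toBasis,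
      LinearMap.toMatrix_adjoint b c]
    exact posSemidef_det_nonneg (Matrix.posSemidef_conjTranspose_mul_self _)
  exact lt_of_le_of_ne hnn (Ne.symm hne)


lemma inv_sa (α : V →ₗ[ℝ] W) :
    ∀ x ∈ (ker (α.comp (adjoint α)))ᗮ, (α.comp (adjoint α)) x ∈ (ker (α.comp (adjoint α)))ᗮ := by
  have h := inv_ata (adjoint α)
  rwa [adjoint_adjoint] at h

lemma ker_sa (α : V →ₗ[ℝ] W) : ker (α.comp (adjoint α)) = ker (adjoint α) := by
  have h := ker_ata (adjoint α)
  rwa [adjoint_adjoint] at h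

lemma orth_ker_sa (α : V →ₗ[ℝ] W) : (ker (α.comp (adjoint α)))ᗮ = range α := by
  rw [ker_sa, ker_adjoint, Submodule.orthogonal_orthogonal]

lemma detPrime_self_comp_adjoint (α : V →ₗ[ℝ] W) :
    detPrime (α.comp (adjoint α)) = detPrime ((adjoint α).comp α) := by
  rw [detPrime_eq _ (inv_sa α), detPrime_eq _ (inv_ata α)]
  set T := (adjoint α).comp α with hT
  set S := α.comp (adjoint α) with hS
  set U : Submodule ℝ V := (ker T)ᗮ with hU
  set U' : Submodule ℝ W := (ker S)ᗮ with hU'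
  have hU'r : U' = range α := orth_ker_sa α
  have hmem : ∀ x : U, α (x : V) ∈ U' := fun x => by rw [hU'r]; exact ⟨x, rfl⟩
  set f : U →ₗ[ℝ] U' := (α.comp U.subtype).codRestrict U' (fun x => hmem x) with hf
  have hinj : Function.Injective f := by
    intro x y hxy
    have h1 : α (x : V) = α (y : V) := congrArg Subtype.val hxy
    have h2 : (x : V) - y ∈ ker α := by
      rw [mem_ker, map_sub, sub_eq_zero]; exact h1
    have h3 : (x : V) - y ∈ ker T := by rw [hT, ker_ata]; exact h2
    have h4 : (x : V) - y ∈ U := sub_mem x.2 y.2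
    have h5 : (x : V) - y = 0 := by
      have := (Submodule.mem_orthogonal _ _).mp h4 _ h3
      exact inner_self_eq_zero.mp this
    exact Subtype.ext (sub_eq_zero.mp h5)
  have hdim : finrank ℝ U = finrank ℝ U' := by
    have e1 : finrank ℝ (ker T) + finrank ℝ U = finrank ℝ V :=
      Submodule.finrank_add_finrank_orthogonal _
    have e2 : finrank ℝ (range α) + finrank ℝ (ker α) = finrank ℝ V :=
      LinearMap.finrank_range_add_finrank_ker α
    have e3 : ker T = ker α := ker_ata α
    have e4 : finrank ℝ U' = finrank ℝ (range α) := by rw [hU'r]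
    rw [e3] at e1
    omega
  set e : U ≃ₗ[ℝ] U' := f.linearEquivOfInjective hinj hdim with he'
  have he : ∀ y : U, ((e y : U') : W) = α (y : V) := by
    intro y
    rw [he', LinearMap.linearEquivOfInjective_apply, hf]
    rfl
  have key : (S.restrict (inv_sa α)) ∘ₗ (e : U →ₗ[ℝ] U') =
      (e : U →ₗ[ℝ] U') ∘ₗ (T.restrict (inv_ata α)) := by
    apply LinearMap.ext; intro x
    apply Subtype.ext
    simp only [coe_comp, Function.comp_apply, LinearEquiv.coe_coe]
    calc ((S.restrict (inv_sa α)) (e x) : W) = S ((e x : U') : W) := rfl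
      _ = α ((adjoint α) (α (x : V))) := by rw [he x]; rfl
      _ = ((e ((T.restrict (inv_ata α)) x) : U') : W) := by rw [he]; rfl
  have h2 : S.restrict (inv_sa α) =
      (e : U →ₗ[ℝ] U') ∘ₗ (T.restrict (inv_ata α)) ∘ₗ (e.symm : U' →ₗ[ℝ] U) := by
    apply LinearMap.ext; intro y
    have hk := LinearMap.congr_fun key (e.symm y)
    simp only [coe_comp, Function.comp_apply, LinearEquiv.coe_coe] at hk ⊢
    rw [e.apply_symm_apply] at hk
    exact hk
  rw [h2, LinearMap.det_conj]

end TorsionAux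

open TorsionAux in
theorem log_torsion_eq_sum_log_vol_of_acyclic
    (C : ℕ → Type*) [∀ q, NormedAddCommGroup (C q)] [∀ q, InnerProductSpace ℝ (C q)]
    [∀ q, FiniteDimensional ℝ (C q)]
    (d : ∀ q : ℕ, C q →ₗ[ℝ] C (q + 1))
    (hdd : ∀ q : ℕ, (d (q + 1)).comp (d q) = 0)
    (N : ℕ) (hsupp : ∀ q > N, Subsingleton (C q))
    -- acyclicity
    (h0 : LinearMap.ker (d 0) = ⊥)
    (hacyclic : ∀ q : ℕ, LinearMap.ker (d (q + 1)) = LinearMap.range (d q))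
    -- the Laplacians Δ^q = d^♯ d + d d^♯
    (Δ : ∀ q : ℕ, C q →ₗ[ℝ] C q)
    (hΔ0 : Δ 0 = (LinearMap.adjoint (d 0)).comp (d 0))
    (hΔ : ∀ q : ℕ, Δ (q + 1) =
      (LinearMap.adjoint (d (q + 1))).comp (d (q + 1)) +
      (d q).comp (LinearMap.adjoint (d q))) :
    (1 / 2 : ℝ) * ∑ q ∈ Finset.range (N + 1),
        (-1 : ℝ) ^ (q + 1) * (q : ℝ) * Real.log (LinearMap.det (Δ q)) =
      ∑ q ∈ Finset.range (N + 1), (-1 : ℝ) ^ q * Real.log (volBar (d q)) := by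
  classical
  set a : ℕ → ℝ := fun q => detPrime ((LinearMap.adjoint (d q)).comp (d q)) with ha
  have hapos : ∀ q, 0 < a q := fun q => detPrime_ata_pos (d q)
  set L : ℕ → ℝ := fun q => Real.log (a q) with hL
  have hvol : ∀ q, Real.log (volBar (d q)) = L q / 2 := by
    intro q
    have hv : volBar (d q) = Real.sqrt (a q) := rfl
    rw [hv, Real.log_sqrt (hapos q).le, hL]
  -- d N = 0, hence a N = 1
  have hdN : d N = 0 := by
    haveI := hsupp (N + 1) (by omega)
    exact LinearMap.ext fun x => Subsingleton.elim _ _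
  have haN : a N = 1 := by
    rw [ha]; simp only
    rw [hdN]
    have hz : (LinearMap.adjoint (0 : C N →ₗ[ℝ] C (N + 1))).comp
        (0 : C N →ₗ[ℝ] C (N + 1)) = 0 := by ext x; simp
    rw [hz]
    have hinv : ∀ x ∈ (LinearMap.ker (0 : C N →ₗ[ℝ] C N))ᗮ,
        (0 : C N →ₗ[ℝ] C N) x ∈ (LinearMap.ker (0 : C N →ₗ[ℝ] C N))ᗮ :=
      fun x _ => by simp
    rw [detPrime_eq _ hinv]
    have hbot : (LinearMap.ker (0 : C N →ₗ[ℝ] C N))ᗮ = ⊥ := by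
      rw [LinearMap.ker_zero, Submodule.top_orthogonal_eq_bot]
    haveI : Subsingleton ((LinearMap.ker (0 : C N →ₗ[ℝ] C N))ᗮ) := by
      have hbot' := (Submodule.eq_bot_iff _).mp hbot
      exact ⟨fun x y => Subtype.ext ((hbot' _ x.2).trans (hbot' _ y.2).symm)⟩
    exact det_subsingleton _
  have hLN : L N = 0 := by rw [hL]; simp only; rw [haN, Real.log_one]
  -- degree 0
  have hdet0 : LinearMap.det (Δ 0) = a 0 := by
    have horth : (LinearMap.ker ((LinearMap.adjoint (d 0)).comp (d 0)))ᗮ = ⊤ := by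
      rw [ker_ata, h0, Submodule.bot_orthogonal_eq_top]
    rw [ha]; simp only
    rw [detPrime_eq _ (inv_ata (d 0)),
      det_restrict_congr horth _ (fun x _ => Submodule.mem_top),
      det_restrict_top, ← hΔ0]
  -- higher degrees
  have hdetS : ∀ q, Real.log (LinearMap.det (Δ (q + 1))) =
      Real.log (a (q + 1)) + Real.log (a q) := by
    intro q
    have hKr : LinearMap.ker (d (q + 1)) = LinearMap.range (d q) := hacyclic q
    have hΔq : Δ (q + 1) = (LinearMap.adjoint (d (q + 1))).comp (d (q + 1)) +
        (d q).comp (LinearMap.adjoint (d q)) := hΔ q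
    have hBzero : ∀ x ∈ (LinearMap.ker (d (q + 1)))ᗮ,
        ((d q).comp (LinearMap.adjoint (d q))) x = 0 := by
      intro x hx
      have hxk : x ∈ LinearMap.ker (LinearMap.adjoint (d q)) := by
        rw [ker_adjoint, ← hKr]; exact hx
      simp [LinearMap.mem_ker.mp hxk]
    have hAzero : ∀ x ∈ LinearMap.ker (d (q + 1)),
        ((LinearMap.adjoint (d (q + 1))).comp (d (q + 1))) x = 0 := by
      intro x hx
      simp [LinearMap.mem_ker.mp hx]
    have hAK : ∀ x ∈ (LinearMap.ker (d (q + 1)))ᗮ,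
        ((LinearMap.adjoint (d (q + 1))).comp (d (q + 1))) x ∈ (LinearMap.ker (d (q + 1)))ᗮ := by
      intro x _
      have := ata_mem_orth (d (q + 1)) x
      rwa [ker_ata] at this
    have hBK : ∀ x ∈ LinearMap.ker (d (q + 1)),
        ((d q).comp (LinearMap.adjoint (d q))) x ∈ LinearMap.ker (d (q + 1)) := by
      intro x _
      rw [hKr]; exact ⟨_, rfl⟩
    have h1 : ∀ x ∈ LinearMap.ker (d (q + 1)), (Δ (q + 1)) x ∈ LinearMap.ker (d (q + 1)) := by
      intro x hx
      rw [hΔq, LinearMap.add_apply, hAzero x hx, zero_add]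
      exact hBK x hx
    have h2 : ∀ x ∈ (LinearMap.ker (d (q + 1)))ᗮ,
        (Δ (q + 1)) x ∈ (LinearMap.ker (d (q + 1)))ᗮ := by
      intro x hx
      rw [hΔq, LinearMap.add_apply, hBzero x hx, add_zero]
      exact hAK x hx
    have hdd' := det_eq_mul_restrict (Δ (q + 1)) (LinearMap.ker (d (q + 1))) h1 h2
    have hres2 : (Δ (q + 1)).restrict h2 =
        ((LinearMap.adjoint (d (q + 1))).comp (d (q + 1))).restrict hAK := by
      apply LinearMap.ext; intro x; apply Subtype.ext
      calc ((Δ (q + 1)).restrict h2 x : C (q + 1)) = Δ (q + 1) (x : C (q + 1)) := rfl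
        _ = ((LinearMap.adjoint (d (q + 1))).comp (d (q + 1))) (x : C (q + 1)) +
              ((d q).comp (LinearMap.adjoint (d q))) (x : C (q + 1)) := by
            rw [hΔq]; rfl
        _ = ((LinearMap.adjoint (d (q + 1))).comp (d (q + 1))) (x : C (q + 1)) := by
            rw [hBzero _ x.2, add_zero]
        _ = _ := rfl
    have hres1 : (Δ (q + 1)).restrict h1 =
        ((d q).comp (LinearMap.adjoint (d q))).restrict hBK := by
      apply LinearMap.ext; intro x; apply Subtype.ext
      calc ((Δ (q + 1)).restrict h1 x : C (q + 1)) = Δ (q + 1) (x : C (q + 1)) := rfl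
        _ = ((LinearMap.adjoint (d (q + 1))).comp (d (q + 1))) (x : C (q + 1)) +
              ((d q).comp (LinearMap.adjoint (d q))) (x : C (q + 1)) := by
            rw [hΔq]; rfl
        _ = ((d q).comp (LinearMap.adjoint (d q))) (x : C (q + 1)) := by
            rw [hAzero _ x.2, zero_add]
        _ = _ := rfl
    have hdetA : LinearMap.det
        (((LinearMap.adjoint (d (q + 1))).comp (d (q + 1))).restrict hAK) = a (q + 1) := by
      rw [ha]; simp only
      rw [detPrime_eq _ (inv_ata (d (q + 1)))]
      exact (det_restrict_congr (by rw [ker_ata]) _ _).symm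
    have hdetB : LinearMap.det
        (((d q).comp (LinearMap.adjoint (d q))).restrict hBK) = a q := by
      rw [ha]; simp only
      rw [← detPrime_self_comp_adjoint (d q), detPrime_eq _ (inv_sa (d q))]
      exact det_restrict_congr (by rw [orth_ker_sa, ← hKr]) _ _
    rw [hdd', hres1, hres2, hdetB, hdetA,
      Real.log_mul (hapos q).ne' (hapos (q + 1)).ne']
    exact add_comm _ _
  -- telescoping
  set w : ℕ → ℝ := fun q => (-1 : ℝ) ^ q * q * L (q - 1) with hw
  have hterm : ∀ q ∈ Finset.range (N + 1),
      (-1 : ℝ) ^ (q + 1) * (q : ℝ) * Real.log (LinearMap.det (Δ q)) =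
        (-1 : ℝ) ^ q * L q + (w (q + 1) - w q) := by
    intro q _
    cases q with
    | zero => simp [hw]
    | succ p =>
      rw [hdetS p]
      have hLp1 : Real.log (a (p + 1)) = L (p + 1) := by rw [hL]
      have hLp : Real.log (a p) = L p := by rw [hL]
      rw [hLp1, hLp, hw]
      simp only [Nat.add_sub_cancel]
      push_cast
      ring
  have hsum : ∑ q ∈ Finset.range (N + 1),
      (-1 : ℝ) ^ (q + 1) * (q : ℝ) * Real.log (LinearMap.det (Δ q)) =
      (∑ q ∈ Finset.range (N + 1), (-1 : ℝ) ^ q * L q) + (w (N + 1) - w 0) := by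
    rw [Finset.sum_congr rfl hterm, Finset.sum_add_distrib, Finset.sum_range_sub w]
  have hwN : w (N + 1) = 0 := by
    rw [hw]; simp only [Nat.add_sub_cancel]
    rw [hLN]; ring
  have hw0 : w 0 = 0 := by rw [hw]; simp
  calc (1 / 2 : ℝ) * ∑ q ∈ Finset.range (N + 1),
        (-1 : ℝ) ^ (q + 1) * (q : ℝ) * Real.log (LinearMap.det (Δ q))
      = (1 / 2 : ℝ) * ((∑ q ∈ Finset.range (N + 1), (-1 : ℝ) ^ q * L q) + (w (N + 1) - w 0)) := by
        rw [hsum]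
    _ = ∑ q ∈ Finset.range (N + 1), (1 / 2 : ℝ) * ((-1 : ℝ) ^ q * L q) := by
        rw [hwN, hw0, sub_zero, add_zero, Finset.mul_sum]
    _ = ∑ q ∈ Finset.range (N + 1), (-1 : ℝ) ^ q * Real.log (volBar (d q)) := by
        refine Finset.sum_congr rfl fun q _ => ?_
        rw [hvol q]; ring
end

section
/- Let (C*, d) be a Z-graded cochain complex of finite-dimensional real inner product spaces, nonzero in finitely many degrees, regarded as a Z₂-graded complex via parity. Then log T_C = (1/2) Σ_q (−1)^{q+1} q log det'(Δ^q), where T_C = √(det'(d^♯d: C^even → C^even)) / √(det'(d^♯d: C^odd → C^odd)) and Δ^q = d^♯d + dd^♯ on C^q, and det' denotes the product of nonzero eigenvalues. -/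
/-!
STATEMENT 13: For a ℤ-graded (here ℕ-graded, supported in degrees `≤ N`) cochain complex of
finite-dimensional real inner product spaces, regarded as a Z₂-graded complex via parity,
`log T_C = (1/2) Σ_q (−1)^{q+1} q log det'(Δ^q)`,
where `T_C = √(det'(d^♯d : C^even → C^even)) / √(det'(d^♯d : C^odd → C^odd))` and
`Δ^q = d^♯d + dd^♯` on `C^q`.  Since `d^♯d` on `C^even = ⊕_{q even} C^q` is block diagonal
with blocks `d_q^♯ d_q`, one has `log T_C = (1/2) Σ_q (−1)^q log det'(d_q^♯ d_q)`, which is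
the form used below.
-/

open Module
open scoped Classical

variable {V : Type*} [NormedAddCommGroup V] [InnerProductSpace ℝ V] [FiniteDimensional ℝ V]

section Helpers

variable {E F G : Type*} [NormedAddCommGroup E] [InnerProductSpace ℝ E] [FiniteDimensional ℝ E]
  [NormedAddCommGroup F] [InnerProductSpace ℝ F] [FiniteDimensional ℝ F]
  [NormedAddCommGroup G] [InnerProductSpace ℝ G] [FiniteDimensional ℝ G]

lemma ker_adjoint_comp_self' (B : E →ₗ[ℝ] F) :
    LinearMap.ker ((LinearMap.adjoint B).comp B) = LinearMap.ker B := by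
  ext x
  simp only [LinearMap.mem_ker, LinearMap.comp_apply]
  constructor
  · intro h
    have h2 : inner ℝ x ((LinearMap.adjoint B) (B x)) = inner ℝ (B x) (B x) :=
      LinearMap.adjoint_inner_right B x (B x)
    rw [h, inner_zero_right] at h2
    exact inner_self_eq_zero.mp h2.symm
  · intro h
    rw [h, map_zero]

lemma mapsTo_of_selfAdjoint (S : E →ₗ[ℝ] E) (hsa : LinearMap.adjoint S = S) :
    ∀ x ∈ (LinearMap.ker S)ᗮ, S x ∈ (LinearMap.ker S)ᗮ := by
  intro x hx
  rw [Submodule.mem_orthogonal]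
  intro u hu
  rw [← hsa, LinearMap.adjoint_inner_right, LinearMap.mem_ker.mp hu, inner_zero_left]

lemma detPrime_of_selfAdjoint (S : E →ₗ[ℝ] E) (hsa : LinearMap.adjoint S = S) :
    detPrime S = LinearMap.det (S.restrict (mapsTo_of_selfAdjoint S hsa)) :=
  dif_pos _

lemma detPrime_ne_zero (S : E →ₗ[ℝ] E) (hsa : LinearMap.adjoint S = S) :
    detPrime S ≠ 0 := by
  rw [detPrime_of_selfAdjoint S hsa]
  intro h0
  obtain ⟨x, hx, hx0⟩ :=
    (Submodule.ne_bot_iff _).mp (LinearMap.bot_lt_ker_of_det_eq_zero h0).ne'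
  have hSx : S (x : E) = 0 := congrArg Subtype.val hx
  have hmem : (x : E) ∈ LinearMap.ker S ⊓ (LinearMap.ker S)ᗮ := ⟨hSx, x.2⟩
  rw [Submodule.inf_orthogonal_eq_bot] at hmem
  exact hx0 (Subtype.ext hmem)

lemma selfAdjoint_adjoint_comp_self (B : E →ₗ[ℝ] F) :
    LinearMap.adjoint ((LinearMap.adjoint B).comp B) = (LinearMap.adjoint B).comp B := by
  rw [LinearMap.adjoint_comp, LinearMap.adjoint_adjoint]

lemma selfAdjoint_self_comp_adjoint (B : E →ₗ[ℝ] F) :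
    LinearMap.adjoint (B.comp (LinearMap.adjoint B)) = B.comp (LinearMap.adjoint B) := by
  rw [LinearMap.adjoint_comp, LinearMap.adjoint_adjoint]

lemma ker_adjoint_eq_orthogonal_range (B : E →ₗ[ℝ] F) :
    LinearMap.ker (LinearMap.adjoint B) = (LinearMap.range B)ᗮ := by
  ext u
  constructor
  · intro hu
    rw [Submodule.mem_orthogonal]
    rintro _ ⟨v, rfl⟩
    rw [← LinearMap.adjoint_inner_right, LinearMap.mem_ker.mp hu, inner_zero_right]
  · intro hu
    rw [LinearMap.mem_ker]
    have h2 : inner ℝ ((LinearMap.adjoint B) u) ((LinearMap.adjoint B) u) =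
        inner ℝ u (B ((LinearMap.adjoint B) u)) :=
      LinearMap.adjoint_inner_left B ((LinearMap.adjoint B) u) u
    rw [← real_inner_comm u (B ((LinearMap.adjoint B) u))] at h2
    rw [(Submodule.mem_orthogonal _ _).mp hu _ ⟨_, rfl⟩] at h2
    exact inner_self_eq_zero.mp h2

lemma orthogonal_ker_eq_range (S : E →ₗ[ℝ] E) (hsa : LinearMap.adjoint S = S) :
    (LinearMap.ker S)ᗮ = LinearMap.range S := by
  rw [show LinearMap.ker S = LinearMap.ker (LinearMap.adjoint S) from by rw [hsa],
    ker_adjoint_eq_orthogonal_range, Submodule.orthogonal_orthogonal]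

/-- `det'(d d^♯) = det'(d^♯ d)`. -/
lemma detPrime_self_comp_adjoint (B : E →ₗ[ℝ] F) :
    detPrime (B.comp (LinearMap.adjoint B)) = detPrime ((LinearMap.adjoint B).comp B) := by
  set S := (LinearMap.adjoint B).comp B with hSdef
  set T := B.comp (LinearMap.adjoint B) with hTdef
  have hsaS := selfAdjoint_adjoint_comp_self B
  have hsaT := selfAdjoint_self_comp_adjoint B
  have hkerS : LinearMap.ker S = LinearMap.ker B := ker_adjoint_comp_self' B
  have hkerT : LinearMap.ker T = LinearMap.ker (LinearMap.adjoint B) := by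
    have := ker_adjoint_comp_self' (LinearMap.adjoint B)
    rwa [LinearMap.adjoint_adjoint] at this
  have hS := mapsTo_of_selfAdjoint S hsaS
  have hT := mapsTo_of_selfAdjoint T hsaT
  have hBmaps : ∀ x ∈ (LinearMap.ker S)ᗮ, B x ∈ (LinearMap.ker T)ᗮ := by
    intro x _
    rw [hkerT, Submodule.mem_orthogonal]
    intro u hu
    rw [← LinearMap.adjoint_inner_left, LinearMap.mem_ker.mp hu, inner_zero_left]
  set φ : ((LinearMap.ker S)ᗮ : Submodule ℝ E) →ₗ[ℝ] ((LinearMap.ker T)ᗮ : Submodule ℝ F) :=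
    B.restrict hBmaps with hφdef
  have hinj : Function.Injective φ := by
    rw [← LinearMap.ker_eq_bot, Submodule.eq_bot_iff]
    rintro ⟨x, hx⟩ hmem
    have hBx : B x = 0 := congrArg Subtype.val hmem
    have : x ∈ LinearMap.ker S ⊓ (LinearMap.ker S)ᗮ := ⟨by rw [hkerS]; exact hBx, hx⟩
    rw [Submodule.inf_orthogonal_eq_bot] at this
    exact Subtype.ext this
  have hsurj : Function.Surjective φ := by
    rintro ⟨y, hy⟩
    have hy' : y ∈ LinearMap.range B := by
      rw [← Submodule.orthogonal_orthogonal (LinearMap.range B),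
        ← ker_adjoint_eq_orthogonal_range, ← hkerT]
      exact hy
    obtain ⟨v, rfl⟩ := hy'
    obtain ⟨k, hk, p, hp, rfl⟩ := Submodule.exists_add_mem_mem_orthogonal (K := LinearMap.ker S) v
    refine ⟨⟨p, hp⟩, Subtype.ext ?_⟩
    have hk0 : B k = 0 := by rw [hkerS] at hk; exact hk
    show B p = B (k + p)
    rw [map_add, hk0, zero_add]
  set e := LinearEquiv.ofBijective φ ⟨hinj, hsurj⟩ with hedef
  have key : (T.restrict hT) ∘ₗ (e : _ →ₗ[ℝ] _) = (e : _ →ₗ[ℝ] _) ∘ₗ (S.restrict hS) := by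
    ext x
    simp only [LinearMap.comp_apply, LinearEquiv.coe_coe, hedef, LinearEquiv.ofBijective_apply,
      hφdef, LinearMap.restrict_coe_apply, hSdef, hTdef]
  have h2 : (e : _ →ₗ[ℝ] _) ∘ₗ (S.restrict hS) ∘ₗ (e.symm : _ →ₗ[ℝ] _) = T.restrict hT := by
    ext y
    have hk := LinearMap.congr_fun key (e.symm y)
    simp only [LinearMap.comp_apply, LinearEquiv.coe_coe] at hk ⊢
    rw [← hk, e.apply_symm_apply]
  calc detPrime T = LinearMap.det (T.restrict hT) := detPrime_of_selfAdjoint T hsaT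
    _ = LinearMap.det ((e : _ →ₗ[ℝ] _) ∘ₗ (S.restrict hS) ∘ₗ (e.symm : _ →ₗ[ℝ] _)) :=
        congrArg LinearMap.det h2.symm
    _ = LinearMap.det (S.restrict hS) := LinearMap.det_conj _ e
    _ = detPrime S := (detPrime_of_selfAdjoint S hsaS).symm

lemma det_prodMap' {M₁ M₂ : Type*} [AddCommGroup M₁] [Module ℝ M₁] [FiniteDimensional ℝ M₁]
    [AddCommGroup M₂] [Module ℝ M₂] [FiniteDimensional ℝ M₂]
    (f : M₁ →ₗ[ℝ] M₁) (g : M₂ →ₗ[ℝ] M₂) :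
    LinearMap.det (f.prodMap g) = LinearMap.det f * LinearMap.det g := by
  let b₁ := Module.finBasis ℝ M₁
  let b₂ := Module.finBasis ℝ M₂
  rw [← LinearMap.det_toMatrix (b₁.prod b₂), ← LinearMap.det_toMatrix b₁,
    ← LinearMap.det_toMatrix b₂, LinearMap.toMatrix_prodMap, Matrix.det_fromBlocks_zero₂₁]

set_option maxHeartbeats 1000000 in
lemma detPrime_add_eq (A : E →ₗ[ℝ] F) (B : G →ₗ[ℝ] E) (hAB : A.comp B = 0) :
    detPrime ((LinearMap.adjoint A).comp A + B.comp (LinearMap.adjoint B)) =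
      detPrime ((LinearMap.adjoint A).comp A) * detPrime (B.comp (LinearMap.adjoint B)) := by
  set S := (LinearMap.adjoint A).comp A with hSdef
  set T := B.comp (LinearMap.adjoint B) with hTdef
  have hsaS := selfAdjoint_adjoint_comp_self A
  have hsaT := selfAdjoint_self_comp_adjoint B
  have hsaSum : LinearMap.adjoint (S + T) = S + T := by
    rw [map_add]; rw [hsaS, hsaT]
  have hABx : ∀ x, A (B x) = 0 := fun x => by
    have := LinearMap.congr_fun hAB x
    simpa using this
  have hBA : (LinearMap.adjoint B).comp (LinearMap.adjoint A) = 0 := by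
    rw [← LinearMap.adjoint_comp, hAB, map_zero]
  have hBAx : ∀ y, (LinearMap.adjoint B) ((LinearMap.adjoint A) y) = 0 := fun y => by
    have := LinearMap.congr_fun hBA y
    simpa using this
  have hST : S.comp T = 0 := by
    ext x
    simp [hSdef, hTdef, hABx]
  have hTS : T.comp S = 0 := by
    ext x
    simp [hSdef, hTdef, hBAx]
  -- kernel of the sum
  have hkerSum : LinearMap.ker (S + T) = LinearMap.ker S ⊓ LinearMap.ker T := by
    apply le_antisymm
    · intro x hx
      have hx0 : S x + T x = 0 := hx
      have hinner : inner ℝ (A x) (A x) + inner ℝ ((LinearMap.adjoint B) x) ((LinearMap.adjoint B) x) = 0 := by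
        have h1 : inner ℝ x (S x) = inner ℝ (A x) (A x) := by
          rw [hSdef]; exact LinearMap.adjoint_inner_right A x (A x)
        have h2 : inner ℝ x (T x) =
            inner ℝ ((LinearMap.adjoint B) x) ((LinearMap.adjoint B) x) := by
          rw [hTdef]
          exact (LinearMap.adjoint_inner_left B ((LinearMap.adjoint B) x) x).symm
        have : inner ℝ x (S x + T x) = 0 := by rw [hx0, inner_zero_right]
        rw [inner_add_right, h1, h2] at this
        exact this
      have hA0 : A x = 0 := by
        have := le_antisymm (by nlinarith [real_inner_self_nonneg (x := (LinearMap.adjoint B) x)])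
          (real_inner_self_nonneg (x := A x))
        exact inner_self_eq_zero.mp this
      have hB0 : (LinearMap.adjoint B) x = 0 := by
        have := le_antisymm (by nlinarith [real_inner_self_nonneg (x := A x)])
          (real_inner_self_nonneg (x := (LinearMap.adjoint B) x))
        exact inner_self_eq_zero.mp this
      constructor
      · show S x = 0; rw [hSdef]; simp [hA0]
      · show T x = 0; rw [hTdef]; simp [hB0]
    · intro x hx
      have h1 : S x = 0 := hx.1
      have h2 : T x = 0 := hx.2
      show S x + T x = 0
      rw [h1, h2, add_zero]
  set U1 := (LinearMap.ker S)ᗮ with hU1def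
  set U2 := (LinearMap.ker T)ᗮ with hU2def
  have hU2S : U2 ≤ LinearMap.ker S := by
    rw [hU2def, orthogonal_ker_eq_range T hsaT]
    rintro _ ⟨z, rfl⟩
    have := LinearMap.congr_fun hST z
    simpa using this
  have hU1T : U1 ≤ LinearMap.ker T := by
    rw [hU1def, orthogonal_ker_eq_range S hsaS]
    rintro _ ⟨z, rfl⟩
    have := LinearMap.congr_fun hTS z
    simpa using this
  have hdisj : Disjoint U1 U2 :=
    ((Submodule.orthogonal_disjoint (LinearMap.ker S)).symm).mono_right hU2S
  have hsup : (LinearMap.ker (S + T))ᗮ = U1 ⊔ U2 := by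
    have h : (U1 ⊔ U2)ᗮ = LinearMap.ker S ⊓ LinearMap.ker T := by
      rw [← Submodule.inf_orthogonal, hU1def, hU2def,
        Submodule.orthogonal_orthogonal, Submodule.orthogonal_orthogonal]
    rw [hkerSum, ← h, Submodule.orthogonal_orthogonal]
  have hSmaps := mapsTo_of_selfAdjoint S hsaS
  have hTmaps := mapsTo_of_selfAdjoint T hsaT
  have hSumMaps := mapsTo_of_selfAdjoint (S + T) hsaSum
  have hadd : ∀ p : (U1 × U2 : Type _), ((U1.subtype).coprod U2.subtype) p ∈
      (LinearMap.ker (S + T))ᗮ := by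
    rintro ⟨x, y⟩
    rw [hsup]
    exact Submodule.add_mem _ (Submodule.mem_sup_left x.2) (Submodule.mem_sup_right y.2)
  set φ := LinearMap.codRestrict _ ((U1.subtype).coprod U2.subtype) hadd with hφdef
  have hinj : Function.Injective φ := by
    rw [← LinearMap.ker_eq_bot, Submodule.eq_bot_iff]
    rintro ⟨x, y⟩ hmem
    have hφ0 : φ (x, y) = 0 := LinearMap.mem_ker.mp hmem
    have h0 : (x : E) + (y : E) = 0 := congrArg Subtype.val hφ0
    have hx2 : (x : E) ∈ U2 := by
      have hxy : (x : E) = -(y : E) := eq_neg_of_add_eq_zero_left h0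
      rw [hxy]; exact neg_mem y.2
    have hx0 : (x : E) = 0 := by
      have : (x : E) ∈ U1 ⊓ U2 := ⟨x.2, hx2⟩
      rwa [hdisj.eq_bot, Submodule.mem_bot] at this
    have hy0 : (y : E) = 0 := by rw [hx0, zero_add] at h0; exact h0
    exact Prod.ext (Subtype.ext hx0) (Subtype.ext hy0)
  have hsurj : Function.Surjective φ := by
    rintro ⟨u, hu⟩
    rw [hsup] at hu
    obtain ⟨x, hx, y, hy, rfl⟩ := Submodule.mem_sup.mp hu
    exact ⟨⟨⟨x, hx⟩, ⟨y, hy⟩⟩, Subtype.ext rfl⟩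
  set e := LinearEquiv.ofBijective φ ⟨hinj, hsurj⟩ with hedef
  have key : ((S + T).restrict hSumMaps) ∘ₗ (e : _ →ₗ[ℝ] _) =
      (e : _ →ₗ[ℝ] _) ∘ₗ ((S.restrict hSmaps).prodMap (T.restrict hTmaps)) := by
    apply LinearMap.ext
    rintro ⟨x, y⟩
    apply Subtype.ext
    simp only [LinearMap.comp_apply, LinearEquiv.coe_coe, hedef, LinearEquiv.ofBijective_apply,
      hφdef, LinearMap.restrict_coe_apply, LinearMap.codRestrict_apply, LinearMap.coprod_apply,
      Submodule.coe_subtype, LinearMap.prodMap_apply, LinearMap.add_apply]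
    have hTx : T (x : E) = 0 := hU1T x.2
    have hSy : S (y : E) = 0 := hU2S y.2
    rw [map_add, map_add, hTx, hSy]
    abel
  have h2 : (e : _ →ₗ[ℝ] _) ∘ₗ ((S.restrict hSmaps).prodMap (T.restrict hTmaps)) ∘ₗ
      (e.symm : _ →ₗ[ℝ] _) = (S + T).restrict hSumMaps := by
    ext y
    have hk := LinearMap.congr_fun key (e.symm y)
    simp only [LinearMap.comp_apply, LinearEquiv.coe_coe] at hk ⊢
    rw [← hk, e.apply_symm_apply]
  calc detPrime (S + T) = LinearMap.det ((S + T).restrict hSumMaps) :=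
        detPrime_of_selfAdjoint _ hsaSum
    _ = LinearMap.det ((e : _ →ₗ[ℝ] _) ∘ₗ ((S.restrict hSmaps).prodMap (T.restrict hTmaps)) ∘ₗ
          (e.symm : _ →ₗ[ℝ] _)) := congrArg LinearMap.det h2.symm
    _ = LinearMap.det ((S.restrict hSmaps).prodMap (T.restrict hTmaps)) :=
        LinearMap.det_conj _ e
    _ = LinearMap.det (S.restrict hSmaps) * LinearMap.det (T.restrict hTmaps) := det_prodMap' _ _
    _ = detPrime S * detPrime T := by
        rw [detPrime_of_selfAdjoint S hsaS, detPrime_of_selfAdjoint T hsaT]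


lemma detPrime_zero : detPrime (0 : E →ₗ[ℝ] E) = 1 := by
  have h : ∀ x ∈ (LinearMap.ker (0 : E →ₗ[ℝ] E))ᗮ,
      (0 : E →ₗ[ℝ] E) x ∈ (LinearMap.ker (0 : E →ₗ[ℝ] E))ᗮ := by
    intro x _
    simp only [LinearMap.zero_apply]
    exact zero_mem _
  rw [detPrime, dif_pos h]
  haveI hsub : Subsingleton ((LinearMap.ker (0 : E →ₗ[ℝ] E))ᗮ : Submodule ℝ E) := by
    rw [LinearMap.ker_zero, Submodule.top_orthogonal_eq_bot]
    infer_instance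
  have : (0 : E →ₗ[ℝ] E).restrict h = LinearMap.id := Subsingleton.elim _ _
  rw [this, LinearMap.det_id]

end Helpers

lemma abel_sum (a b : ℕ → ℝ) (h : ∀ q, b (q + 1) = a (q + 1) + a q) (n : ℕ) :
    ∑ q ∈ Finset.range (n + 1), (-1 : ℝ) ^ (q + 1) * (q : ℝ) * b q
      = ∑ q ∈ Finset.range (n + 1), (-1 : ℝ) ^ q * a q
        - (-1 : ℝ) ^ n * ((n : ℝ) + 1) * a n := by
  induction n with
  | zero => simp
  | succ n ih =>
      rw [Finset.sum_range_succ, ih, h n,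
        Finset.sum_range_succ (f := fun q => (-1 : ℝ) ^ q * a q) (n := n + 1)]
      push_cast
      ring


theorem log_torsion_eq_weighted_sum_log_detPrime_laplacians
    (C : ℕ → Type*) [∀ q, NormedAddCommGroup (C q)] [∀ q, InnerProductSpace ℝ (C q)]
    [∀ q, FiniteDimensional ℝ (C q)]
    (d : ∀ q : ℕ, C q →ₗ[ℝ] C (q + 1))
    (hdd : ∀ q : ℕ, (d (q + 1)).comp (d q) = 0)
    (N : ℕ) (hsupp : ∀ q > N, Subsingleton (C q))
    -- the Laplacians Δ^q = d^♯ d + d d^♯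
    (Δ : ∀ q : ℕ, C q →ₗ[ℝ] C q)
    (hΔ0 : Δ 0 = (LinearMap.adjoint (d 0)).comp (d 0))
    (hΔ : ∀ q : ℕ, Δ (q + 1) =
      (LinearMap.adjoint (d (q + 1))).comp (d (q + 1)) +
      (d q).comp (LinearMap.adjoint (d q)))
    -- `log T_C`, computed blockwise over the even/odd decomposition
    (logT : ℝ)
    (hlogT : logT = (1 / 2 : ℝ) * ∑ q ∈ Finset.range (N + 1),
      (-1 : ℝ) ^ q * Real.log (detPrime ((LinearMap.adjoint (d q)).comp (d q)))) :
    logT = (1 / 2 : ℝ) * ∑ q ∈ Finset.range (N + 1),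
      (-1 : ℝ) ^ (q + 1) * (q : ℝ) * Real.log (detPrime (Δ q)) := by
  have a : ℕ → ℝ := fun q => Real.log (detPrime ((LinearMap.adjoint (d q)).comp (d q)))
  set a : ℕ → ℝ := fun q => Real.log (detPrime ((LinearMap.adjoint (d q)).comp (d q))) with hadef
  set b : ℕ → ℝ := fun q => Real.log (detPrime (Δ q)) with hbdef
  have hstep : ∀ q, b (q + 1) = a (q + 1) + a q := by
    intro q
    have hprod := detPrime_add_eq (d (q + 1)) (d q) (hdd q)
    have hswap := detPrime_self_comp_adjoint (d q)
    have hne1 : detPrime ((LinearMap.adjoint (d (q + 1))).comp (d (q + 1))) ≠ 0 :=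
      detPrime_ne_zero _ (selfAdjoint_adjoint_comp_self _)
    have hne2 : detPrime ((d q).comp (LinearMap.adjoint (d q))) ≠ 0 :=
      detPrime_ne_zero _ (selfAdjoint_self_comp_adjoint _)
    have hne3 : detPrime ((LinearMap.adjoint (d q)).comp (d q)) ≠ 0 :=
      detPrime_ne_zero _ (selfAdjoint_adjoint_comp_self _)
    calc b (q + 1) = Real.log (detPrime (Δ (q + 1))) := rfl
      _ = Real.log (detPrime ((LinearMap.adjoint (d (q + 1))).comp (d (q + 1)) +
            (d q).comp (LinearMap.adjoint (d q)))) := by rw [hΔ q]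
      _ = Real.log (detPrime ((LinearMap.adjoint (d (q + 1))).comp (d (q + 1))) *
            detPrime ((d q).comp (LinearMap.adjoint (d q)))) := by rw [hprod]
      _ = Real.log (detPrime ((LinearMap.adjoint (d (q + 1))).comp (d (q + 1)))) +
            Real.log (detPrime ((d q).comp (LinearMap.adjoint (d q)))) :=
          Real.log_mul hne1 hne2
      _ = a (q + 1) + a q := by rw [hadef]; simp only []; rw [hswap]
  have haN : a N = 0 := by
    haveI := hsupp (N + 1) (Nat.lt_succ_self N)
    have hd0 : d N = 0 := by
      ext x
      exact Subsingleton.elim _ _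
    have : (LinearMap.adjoint (d N)).comp (d N) = 0 := by
      rw [hd0]
      ext x
      simp
    rw [hadef]
    simp only []
    rw [this, detPrime_zero, Real.log_one]
  have key : ∑ q ∈ Finset.range (N + 1),
        (-1 : ℝ) ^ q * Real.log (detPrime ((LinearMap.adjoint (d q)).comp (d q)))
      = ∑ q ∈ Finset.range (N + 1),
        (-1 : ℝ) ^ (q + 1) * (q : ℝ) * Real.log (detPrime (Δ q)) := by
    have habel := abel_sum a b hstep N
    rw [haN, mul_zero, sub_zero] at habel
    exact habel.symm
  rw [hlogT, key]
end
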